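/- Let s=(s₁,s₂) and s̃=(s̃₁,s̃₂) be two solutions of the explicit slow-down system on [0,T] with s₁(t)>0 and s₂(t)>0 for all t, let T₁∈[0,T] be such that s₁≤s₂ on [0,T₁] and s₂≤s₁ on [T₁,T], and set Δsᵢ(t)=s̃ᵢ(t)−sᵢ(t). Let 0<μ<1 and assume: (1) Δs₂(t)>0 and |Δs₁(t)| ≤ μ·Δs₂(t) for all t∈[0,T]; (2) Δs₂(0)/s₂(0) < (1−μ)/72. Define κ(t) = Δs₂(t)/s₂(t). Then for every t∈[0,T₁] one has 0 < κ(t) < (1−μ)/72 and κ'(t) < −((1−μ)·α·log λ/(2r₀^α))·s₂(t)^{2α}·κ(t); in particular κ is strictly decreasing on [0,T₁]. -/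

import Mathlib

open Set

/-- Concavity estimate for `rpow`: for `0 < y ≤ x` and `0 < α < 1`,
`α * x^(α-1) * (x - y) ≤ x^α - y^α`. -/
lemma slowdown_rpow_concave_aux {α x y : ℝ} (hy : 0 < y) (hxy : y ≤ x)
    (hα : 0 < α) (hα1 : α < 1) :
    α * x ^ (α - 1) * (x - y) ≤ x ^ α - y ^ α := by
  rcases eq_or_lt_of_le hxy with rfl | h
  · simp
  · have hx : 0 < x := hy.trans h
    obtain ⟨ξ, hξ, hξeq⟩ := exists_hasDerivAt_eq_slope (fun z => z ^ α)
      (fun z => α * z ^ (α - 1)) h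
      (fun z hz => (Real.continuousAt_rpow_const z α
        (Or.inl (hy.trans_le hz.1).ne')).continuousWithinAt)
      (fun z hz => Real.hasDerivAt_rpow_const (Or.inl (hy.trans hz.1).ne'))
    have hξpos : 0 < ξ := hy.trans hξ.1
    have hmono : x ^ (α - 1) ≤ ξ ^ (α - 1) :=
      Real.rpow_le_rpow_of_nonpos hξpos hξ.2.le (by linarith)
    have heq : x ^ α - y ^ α = α * ξ ^ (α - 1) * (x - y) := by
      have hxy' : x - y ≠ 0 := sub_ne_zero.mpr h.ne'
      field_simp at hξeq
      linarith [hξeq]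
    rw [heq]
    have hxy0 : 0 ≤ x - y := by linarith
    have := mul_le_mul_of_nonneg_right (mul_le_mul_of_nonneg_left hmono hα.le) hxy0
    linarith


set_option maxHeartbeats 1600000 in
/-- Core arithmetic estimate for the slow-down system. -/
lemma slowdown_core {μ α L R a b s1 v1 v2 : ℝ}
    (hμ0 : 0 ≤ μ) (hμ1 : μ < 1) (hα : 0 < α) (hα1 : α < 1)
    (hL : 0 < L) (hR : 0 < R)
    (ha : 0 < a) (hs1 : 0 < s1) (hb : 0 < b)
    (hord : s1 ≤ a) (habs1 : -(μ * b) ≤ v1 - s1) (habs2 : v1 - s1 ≤ μ * b)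
    (hblt : b < a / 72) (hv2 : v2 = a + b) :
    (1 - μ) * α * L / (2 * R) * a ^ (2 * α) * b
      < L / R * v2 * ((v1 ^ 2 + v2 ^ 2) ^ α - (s1 ^ 2 + a ^ 2) ^ α) := by
  have h1μ : 0 < 1 - μ := by linarith
  have hv2pos : 0 < v2 := by rw [hv2]; linarith
  have hμb : μ * b ≤ b := by
    have := mul_le_mul_of_nonneg_right hμ1.le hb.le; linarith
  have hμb0 : 0 ≤ μ * b := mul_nonneg hμ0 hb.le
  have hv2le : v2 ≤ (73 / 72) * a := by rw [hv2]; linarith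
  have hv1le : v1 ≤ v2 := by rw [hv2]; linarith
  have hv1ge : -v2 ≤ v1 := by rw [hv2]; linarith
  set Ru := v1 ^ 2 + v2 ^ 2 with hRu
  set Rs := s1 ^ 2 + a ^ 2 with hRs
  have hRspos : 0 < Rs := by positivity
  have hRupos : 0 < Ru := by positivity
  -- lower bound on Ru - Rs
  have h1 : -(μ * b) * (2 * a + b) ≤ (v1 - s1) * (v1 + s1) := by
    rcases le_or_gt 0 (v1 + s1) with hvs | hvs
    · have h2 : v1 + s1 ≤ 2 * a + b := by linarith
      have hA : -(μ * b) * (v1 + s1) ≤ (v1 - s1) * (v1 + s1) :=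
        mul_le_mul_of_nonneg_right habs1 hvs
      have hBB : -(μ * b) * (2 * a + b) ≤ -(μ * b) * (v1 + s1) :=
        mul_le_mul_of_nonpos_left h2 (by linarith)
      linarith
    · have h2 : -(2 * a + b) ≤ v1 + s1 := by linarith
      have hA : μ * b * (v1 + s1) ≤ (v1 - s1) * (v1 + s1) :=
        mul_le_mul_of_nonpos_right habs2 hvs.le
      have hBB : μ * b * (-(2 * a + b)) ≤ μ * b * (v1 + s1) :=
        mul_le_mul_of_nonneg_left h2 hμb0
      linarith [hA, hBB]
  have hid : Ru - Rs = (v1 - s1) * (v1 + s1) + b * (2 * a + b) := by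
    rw [hRu, hRs, hv2]; ring
  have hdiff : 2 * (1 - μ) * a * b ≤ Ru - Rs := by
    rw [hid]
    linarith [h1, mul_nonneg h1μ.le (sq_nonneg b)]
  have hRsRu : Rs ≤ Ru := by
    linarith [hdiff, mul_pos (mul_pos (mul_pos two_pos h1μ) ha) hb]
  have hRu3 : Ru ≤ 3 * a ^ 2 := by
    have hv1sq : v1 ^ 2 ≤ v2 ^ 2 := sq_le_sq' hv1ge hv1le
    have hv2sq : v2 ^ 2 ≤ (73 / 72 * a) ^ 2 := pow_le_pow_left₀ hv2pos.le hv2le 2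
    linarith [hv1sq, hv2sq, sq_nonneg a, hRu]
  -- concavity bound
  have hconc : α * Ru ^ (α - 1) * (Ru - Rs) ≤ Ru ^ α - Rs ^ α :=
    slowdown_rpow_concave_aux hRspos hRsRu hα hα1
  set Q := Ru ^ (α - 1) with hQ
  have hQpos : 0 < Q := Real.rpow_pos_of_pos hRupos _
  set P := a ^ (2 * α) with hP
  have hPpos : 0 < P := Real.rpow_pos_of_pos ha _
  have ha2 : (0:ℝ) < a ^ 2 := by positivity
  -- P ≤ 3 a² Q
  have hPQ : P ≤ 3 * a ^ 2 * Q := by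
    have h1' : (3 * a ^ 2 : ℝ) ^ (α - 1) ≤ Q :=
      Real.rpow_le_rpow_of_nonpos hRupos hRu3 (by linarith)
    have h2' : (3 * a ^ 2 : ℝ) ^ (α - 1) = 3 ^ (α - 1) * (a ^ 2) ^ (α - 1) :=
      Real.mul_rpow (by norm_num) (by positivity)
    have h3' : (1 / 3 : ℝ) ≤ 3 ^ (α - 1) := by
      have := Real.rpow_le_rpow_of_exponent_le (by norm_num : (1:ℝ) ≤ 3)
        (by linarith : (-1 : ℝ) ≤ α - 1)
      rwa [Real.rpow_neg_one, show ((3:ℝ)⁻¹) = 1/3 by norm_num] at this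
    have h4' : (a ^ 2 : ℝ) ^ (α - 1) = P / a ^ 2 := by
      rw [← Real.rpow_natCast a 2, ← Real.rpow_mul ha.le, hP, ← Real.rpow_sub ha]
      congr 1
      ring
    have h5' : (1 / 3 : ℝ) * (P / a ^ 2) ≤ Q := by
      calc (1 / 3 : ℝ) * (P / a ^ 2) ≤ 3 ^ (α - 1) * (P / a ^ 2) := by
            apply mul_le_mul_of_nonneg_right h3'; positivity
        _ = (3 * a ^ 2 : ℝ) ^ (α - 1) := by rw [h2', h4']
        _ ≤ Q := h1'
    calc P = 3 * a ^ 2 * ((1 / 3 : ℝ) * (P / a ^ 2)) := by field_simp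
      _ ≤ 3 * a ^ 2 * Q := mul_le_mul_of_nonneg_left h5' (by positivity)
  -- main chain
  set Y := α * Q * (2 * (1 - μ) * a * b) with hY
  have hYpos : 0 < Y :=
    mul_pos (mul_pos hα hQpos) (mul_pos (mul_pos (mul_pos two_pos h1μ) ha) hb)
  have hstep1 : Y ≤ Ru ^ α - Rs ^ α := by
    calc Y ≤ α * Q * (Ru - Rs) := mul_le_mul_of_nonneg_left hdiff (by positivity)
      _ ≤ Ru ^ α - Rs ^ α := hconc
  set X := Ru ^ α - Rs ^ α with hXdef
  have hX : 0 < X := lt_of_lt_of_le hYpos hstep1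
  set W := (1 - μ) * α * L * a ^ 2 * Q * b with hW
  have hWpos : 0 < W :=
    mul_pos (mul_pos (mul_pos (mul_pos (mul_pos h1μ hα) hL) ha2) hQpos) hb
  have hchain1 : (1 - μ) * α * L * P * b ≤ 3 * W := by
    have h6 := mul_le_mul_of_nonneg_right hPQ hb.le
    have h7 : (0:ℝ) ≤ (1 - μ) * α * L := by positivity
    have h8 := mul_le_mul_of_nonneg_left h6 h7
    linarith [h8, hW]
  have hchain2 : 2 * W = L * a * Y := by rw [hW, hY]; ring
  have hchain3 : L * a * Y ≤ L * a * X :=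
    mul_le_mul_of_nonneg_left hstep1 (by positivity)
  have hav2 : a < v2 := by rw [hv2]; linarith
  have hchain4 : L * a * X < L * v2 * X := by
    have h9 := mul_lt_mul_of_pos_left hav2 (mul_pos hL hX)
    linarith [h9]
  have hmain : (1 - μ) * α * L * P * b < 2 * (L * v2 * X) := by
    linarith [hchain1, hchain2, hchain3, hchain4, hWpos]
  calc (1 - μ) * α * L / (2 * R) * P * b
      = ((1 - μ) * α * L * P * b) / (2 * R) := by ring
    _ < (2 * (L * v2 * X)) / (2 * R) := div_lt_div_of_pos_right hmain (by positivity)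
    _ = L / R * v2 * X := by field_simp

set_option maxHeartbeats 1600000 in
theorem slowdown_kappa_decreasing
    (lam α r₀ C₁ T T₁ μ : ℝ) (hlam : 1 < lam) (hα : 0 < α) (hα1 : α < 1)
    (hr₀ : 0 < r₀) (hr₀1 : r₀ < 1)
    (hC₁ : C₁ = 2 * α * Real.log lam / r₀ ^ α)
    (hμ : 0 < μ) (hμ1 : μ < 1)
    (hT₁mem : T₁ ∈ Icc (0:ℝ) T)
    (s₁ s₂ u₁ u₂ : ℝ → ℝ)
    (hs₁ : ∀ t ∈ Icc (0:ℝ) T,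
      HasDerivAt s₁ ((Real.log lam / r₀ ^ α) * s₁ t * (s₁ t ^ 2 + s₂ t ^ 2) ^ α) t)
    (hs₂ : ∀ t ∈ Icc (0:ℝ) T,
      HasDerivAt s₂ (-((Real.log lam / r₀ ^ α) * s₂ t * (s₁ t ^ 2 + s₂ t ^ 2) ^ α)) t)
    (hu₁ : ∀ t ∈ Icc (0:ℝ) T,
      HasDerivAt u₁ ((Real.log lam / r₀ ^ α) * u₁ t * (u₁ t ^ 2 + u₂ t ^ 2) ^ α) t)
    (hu₂ : ∀ t ∈ Icc (0:ℝ) T,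
      HasDerivAt u₂ (-((Real.log lam / r₀ ^ α) * u₂ t * (u₁ t ^ 2 + u₂ t ^ 2) ^ α)) t)
    (hpos₁ : ∀ t ∈ Icc (0:ℝ) T, 0 < s₁ t)
    (hpos₂ : ∀ t ∈ Icc (0:ℝ) T, 0 < s₂ t)
    (hord₁ : ∀ t ∈ Icc (0:ℝ) T₁, s₁ t ≤ s₂ t)
    (hord₂ : ∀ t ∈ Icc T₁ T, s₂ t ≤ s₁ t)
    (hΔ : ∀ t ∈ Icc (0:ℝ) T, 0 < u₂ t - s₂ t ∧ |u₁ t - s₁ t| ≤ μ * (u₂ t - s₂ t))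
    (hinit : (u₂ 0 - s₂ 0) / s₂ 0 < (1 - μ) / 72)
    (κ : ℝ → ℝ) (hκ : ∀ t, κ t = (u₂ t - s₂ t) / s₂ t) :
    (∀ t ∈ Icc (0:ℝ) T₁,
      0 < κ t ∧ κ t < (1 - μ) / 72 ∧
      deriv κ t < -((1 - μ) * α * Real.log lam / (2 * r₀ ^ α)) * s₂ t ^ (2 * α) * κ t) ∧
    StrictAntiOn κ (Icc (0:ℝ) T₁) := by
  obtain ⟨hT₁0, hT₁T⟩ := hT₁mem
  have hr₀α : (0:ℝ) < r₀ ^ α := Real.rpow_pos_of_pos hr₀ α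
  have hlog : 0 < Real.log lam := Real.log_pos hlam
  have h1μ : 0 < 1 - μ := by linarith
  set c : ℝ := Real.log lam / r₀ ^ α with hc
  have hcpos : 0 < c := div_pos hlog hr₀α
  set B : ℝ := (1 - μ) / 72 with hB
  have hBpos : 0 < B := by positivity
  have hB72 : B ≤ 1 / 72 := by rw [hB]; linarith
  have hsub : Icc (0:ℝ) T₁ ⊆ Icc 0 T := Icc_subset_Icc le_rfl hT₁T
  have hκf : κ = fun t => (u₂ t - s₂ t) / s₂ t := funext hκ
  have hκpos : ∀ t ∈ Icc (0:ℝ) T, 0 < κ t := fun t ht => by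
    rw [hκ]; exact div_pos (hΔ t ht).1 (hpos₂ t ht)
  -- derivative of κ
  have hD : ∀ t ∈ Icc (0:ℝ) T, HasDerivAt κ
      (-(c * u₂ t * ((u₁ t ^ 2 + u₂ t ^ 2) ^ α - (s₁ t ^ 2 + s₂ t ^ 2) ^ α) / s₂ t)) t := by
    intro t ht
    have hane : s₂ t ≠ 0 := (hpos₂ t ht).ne'
    have h := ((hu₂ t ht).sub (hs₂ t ht)).div (hs₂ t ht) hane
    rw [hκf]
    refine HasDerivAt.congr_deriv h ?_
    rw [Pi.sub_apply]
    field_simp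
    ring
  have hκcont : ContinuousOn κ (Icc (0:ℝ) T) :=
    fun t ht => (hD t ht).continuousAt.continuousWithinAt
  -- positivity of the coefficient on the RHS
  have hcoef : 0 < (1 - μ) * α * Real.log lam / (2 * r₀ ^ α) :=
    div_pos (mul_pos (mul_pos h1μ hα) hlog) (by positivity)
  -- key pointwise estimate
  have key : ∀ t ∈ Icc (0:ℝ) T₁, κ t < B →
      -(c * u₂ t * ((u₁ t ^ 2 + u₂ t ^ 2) ^ α - (s₁ t ^ 2 + s₂ t ^ 2) ^ α) / s₂ t)
        < -((1 - μ) * α * Real.log lam / (2 * r₀ ^ α)) * s₂ t ^ (2 * α) * κ t := by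
    intro t ht hκB
    have htT : t ∈ Icc (0:ℝ) T := hsub ht
    have ha : 0 < s₂ t := hpos₂ t htT
    have hb : 0 < u₂ t - s₂ t := (hΔ t htT).1
    have habs' := abs_le.mp (hΔ t htT).2
    have hκt : κ t = (u₂ t - s₂ t) / s₂ t := hκ t
    have hblt : u₂ t - s₂ t < s₂ t / 72 := by
      have h0 : (u₂ t - s₂ t) / s₂ t < 1 / 72 := lt_of_lt_of_le (hκt ▸ hκB) hB72
      calc u₂ t - s₂ t = (u₂ t - s₂ t) / s₂ t * s₂ t := by field_simp
        _ < 1 / 72 * s₂ t := mul_lt_mul_of_pos_right h0 ha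
        _ = s₂ t / 72 := by ring
    have final := slowdown_core (μ := μ) (α := α) (L := Real.log lam) (R := r₀ ^ α) (v1 := u₁ t) (v2 := u₂ t)
      hμ.le hμ1 hα hα1 hlog hr₀α ha (hpos₁ t htT) hb (hord₁ t ht)
      habs'.1 habs'.2 hblt (by ring)
    rw [hκt]
    have e1 : -(c * u₂ t * ((u₁ t ^ 2 + u₂ t ^ 2) ^ α - (s₁ t ^ 2 + s₂ t ^ 2) ^ α) / s₂ t)
        = (-(Real.log lam / r₀ ^ α * u₂ t *
            ((u₁ t ^ 2 + u₂ t ^ 2) ^ α - (s₁ t ^ 2 + s₂ t ^ 2) ^ α))) / s₂ t := by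
      rw [hc]; ring
    have e2 : -((1 - μ) * α * Real.log lam / (2 * r₀ ^ α)) * s₂ t ^ (2 * α)
          * ((u₂ t - s₂ t) / s₂ t)
        = (-((1 - μ) * α * Real.log lam / (2 * r₀ ^ α) * s₂ t ^ (2 * α)
            * (u₂ t - s₂ t))) / s₂ t := by ring
    rw [e1, e2]
    exact div_lt_div_of_pos_right (by linarith [final]) ha
  -- the RHS is negative
  have hRHSneg : ∀ t ∈ Icc (0:ℝ) T, 0 < κ t →
      -((1 - μ) * α * Real.log lam / (2 * r₀ ^ α)) * s₂ t ^ (2 * α) * κ t < 0 := by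
    intro t ht hκt
    have hP : 0 < s₂ t ^ (2 * α) := Real.rpow_pos_of_pos (hpos₂ t ht) _
    linarith [mul_pos (mul_pos hcoef hP) hκt]
  have hκ0 : κ 0 < B := by rw [hκ]; exact hinit
  -- bootstrap: κ < B on [0,T₁]
  have bound : ∀ t ∈ Icc (0:ℝ) T₁, κ t < B := by
    by_contra hcon
    push_neg at hcon
    obtain ⟨t₀, ht₀, hBt₀⟩ := hcon
    set S := Icc (0:ℝ) T₁ ∩ κ ⁻¹' Ici B with hS
    have hSne : S.Nonempty := ⟨t₀, ht₀, hBt₀⟩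
    have hSclosed : IsClosed S :=
      (hκcont.mono hsub).preimage_isClosed_of_isClosed isClosed_Icc isClosed_Ici
    have hSbdd : BddBelow S := ⟨0, fun x hx => hx.1.1⟩
    set t₁ := sInf S with ht₁def
    have ht₁S : t₁ ∈ S := hSclosed.csInf_mem hSne hSbdd
    have ht₁mem : t₁ ∈ Icc (0:ℝ) T₁ := ht₁S.1
    have hBt₁ : B ≤ κ t₁ := ht₁S.2
    have ht₁pos : 0 < t₁ := by
      rcases eq_or_lt_of_le ht₁mem.1 with h | h
      · exfalso; rw [← h] at hBt₁; linarith
      · exact h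
    have hless : ∀ τ, 0 ≤ τ → τ < t₁ → κ τ < B := by
      intro τ hτ0 hτlt
      by_contra h
      push_neg at h
      have : τ ∈ S := ⟨⟨hτ0, hτlt.le.trans ht₁mem.2⟩, h⟩
      exact absurd (csInf_le hSbdd this) (not_le.mpr hτlt)
    have hanti : StrictAntiOn κ (Icc 0 t₁) := by
      apply strictAntiOn_of_deriv_neg (convex_Icc 0 t₁)
        (hκcont.mono (Icc_subset_Icc le_rfl (ht₁mem.2.trans hT₁T)))
      intro x hx
      rw [interior_Icc] at hx
      have hx1 : x ∈ Icc (0:ℝ) T₁ := ⟨hx.1.le, hx.2.le.trans ht₁mem.2⟩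
      rw [(hD x (hsub hx1)).deriv]
      exact lt_trans (key x hx1 (hless x hx.1.le hx.2))
        (hRHSneg x (hsub hx1) (hκpos x (hsub hx1)))
    have : κ t₁ < κ 0 := hanti ⟨le_rfl, ht₁pos.le⟩ ⟨ht₁pos.le, le_rfl⟩ ht₁pos
    linarith
  refine ⟨fun t ht => ⟨hκpos t (hsub ht), bound t ht, ?_⟩, ?_⟩
  · rw [(hD t (hsub ht)).deriv]
    exact key t ht (bound t ht)
  · apply strictAntiOn_of_deriv_neg (convex_Icc 0 T₁) (hκcont.mono hsub)
    intro x hx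
    rw [interior_Icc] at hx
    have hx1 : x ∈ Icc (0:ℝ) T₁ := ⟨hx.1.le, hx.2.le⟩
    rw [(hD x (hsub hx1)).deriv]
    exact lt_trans (key x hx1 (bound x hx1))
      (hRHSneg x (hsub hx1) (hκpos x (hsub hx1)))
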